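/- arXiv:0904.1053 — 2 statements merged into one kernel-verified Lean document; each statement's English description precedes it below -/
import Mathlib

section
/- For every real z > 0, lim_{N→∞} ( Σ_{n=1}^N 1/(2nz) - ∫_0^N ( ψ(tz + 1) - log(tz) ) dt ) = (γ - log(2πz))/(2z), where γ is Euler's constant. -/
open Real MeasureTheory Filter intervalIntegral

/-- The digamma function `ψ = Γ'/Γ`. -/
noncomputable def digamma (x : ℝ) : ℝ := deriv Real.Gamma x / Real.Gamma x

namespace LimitSumSubIntegralAux

open Set

lemma gamma_arg_ne {x : ℝ} (hx : 0 < x) : ∀ m : ℕ, x ≠ -m := by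
  intro m h
  have : (0:ℝ) ≤ (m:ℝ) := Nat.cast_nonneg m
  rw [h] at hx; linarith

lemma continuousAt_deriv_Gamma {x : ℝ} (hx : 0 < x) :
    ContinuousAt (deriv Real.Gamma) x := by
  have hU : IsOpen {s : ℂ | 0 < s.re} := isOpen_lt continuous_const Complex.continuous_re
  have hdiff : DifferentiableOn ℂ Complex.Gamma {s : ℂ | 0 < s.re} := by
    intro s hs
    refine (Complex.differentiableAt_Gamma s ?_).differentiableWithinAt
    intro m h
    have hs' : (0:ℝ) < s.re := hs
    rw [h] at hs'
    simp only [Complex.neg_re, Complex.natCast_re] at hs'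
    have : (0:ℝ) ≤ (m:ℝ) := Nat.cast_nonneg m
    linarith
  have han := (hdiff.analyticOnNhd hU).deriv
  have hmem : ((x:ℂ)) ∈ {s : ℂ | 0 < s.re} := by simpa using hx
  have hca : ContinuousAt (deriv Complex.Gamma) (x:ℂ) := (han _ hmem).continuousAt
  have hre : ContinuousAt (fun y : ℝ => (deriv Complex.Gamma (y:ℂ)).re) x :=
    Complex.continuous_re.continuousAt.comp (hca.comp Complex.continuous_ofReal.continuousAt)
  refine hre.congr ?_
  have hev : ∀ᶠ y in nhds x, 0 < y := eventually_gt_nhds hx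
  filter_upwards [hev] with y hy
  have hd : HasDerivAt Real.Gamma ((deriv Complex.Gamma (y:ℂ)).re) y :=
    (Complex.differentiableAt_Gamma _ (by
      intro m h
      have h' : y = -(m:ℝ) := by exact_mod_cast h
      exact gamma_arg_ne hy m h')).hasDerivAt.real_of_complex
  exact (hd.deriv).symm

lemma continuousAt_digamma {x : ℝ} (hx : 0 < x) : ContinuousAt digamma x := by
  have hG : ContinuousAt Real.Gamma x :=
    (Real.differentiableAt_Gamma (gamma_arg_ne hx)).continuousAt
  exact (continuousAt_deriv_Gamma hx).div hG (Real.Gamma_pos_of_pos hx).ne'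

lemma hasDerivAt_log_Gamma {x : ℝ} (hx : 0 < x) :
    HasDerivAt (fun u => Real.log (Real.Gamma u)) (digamma x) x :=
  (Real.differentiableAt_Gamma (gamma_arg_ne hx)).hasDerivAt.log
    (Real.Gamma_pos_of_pos hx).ne'

lemma integral_digamma (z : ℝ) (hz : 0 < z) (N : ℕ) :
    ∫ t in (0:ℝ)..(N:ℝ), digamma (t * z + 1)
      = Real.log (Real.Gamma ((N:ℝ) * z + 1)) / z := by
  have hN : (0:ℝ) ≤ (N:ℝ) := Nat.cast_nonneg N
  have hpos : ∀ t : ℝ, 0 ≤ t → 0 < t * z + 1 := fun t ht => by positivity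
  have hderiv : ∀ t ∈ uIcc (0:ℝ) (N:ℝ),
      HasDerivAt (fun t : ℝ => Real.log (Real.Gamma (t * z + 1)))
        (digamma (t * z + 1) * z) t := by
    intro t ht
    rw [uIcc_of_le hN] at ht
    have h1 : HasDerivAt (fun t : ℝ => t * z + 1) z t :=
      (hasDerivAt_mul_const z).add_const 1
    exact (hasDerivAt_log_Gamma (hpos t ht.1)).comp t h1
  have hcont : ContinuousOn (fun t : ℝ => digamma (t * z + 1) * z) (uIcc (0:ℝ) (N:ℝ)) := by
    intro t ht
    rw [uIcc_of_le hN] at ht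
    refine ContinuousAt.continuousWithinAt ?_
    have hinner : ContinuousAt (fun u : ℝ => u * z + 1) t :=
      ((continuous_mul_right z).add continuous_const).continuousAt
    exact (ContinuousAt.comp (g := digamma) (f := fun u : ℝ => u * z + 1)
      (continuousAt_digamma (hpos t ht.1)) hinner).mul continuousAt_const
  have hint : IntervalIntegrable (fun t : ℝ => digamma (t * z + 1) * z)
      MeasureTheory.volume 0 (N:ℝ) := hcont.intervalIntegrable
  have key := intervalIntegral.integral_eq_sub_of_hasDerivAt hderiv hint
  rw [intervalIntegral.integral_mul_const] at key
  have h0 : (0:ℝ) * z + 1 = 1 := by ring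
  rw [h0, Real.Gamma_one, Real.log_one, sub_zero] at key
  rw [eq_div_iff hz.ne']
  exact key

lemma intervalIntegrable_log_aux {b : ℝ} (hb : 0 ≤ b) :
    IntervalIntegrable Real.log MeasureTheory.volume 0 b := by
  have base : ∀ c : ℝ, 0 ≤ c → c ≤ 1 → IntervalIntegrable Real.log MeasureTheory.volume 0 c := by
    intro c hc0 hc1
    have h := intervalIntegral.intervalIntegrable_deriv_of_nonneg
      (g := fun t : ℝ => t - t * Real.log t) (g' := fun t : ℝ => -Real.log t)
      (by
        refine (continuous_id.sub Real.continuous_mul_log).continuousOn)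
      (by
        intro t ht
        rw [min_eq_left hc0, max_eq_right hc0] at ht
        have h1 : HasDerivAt (fun t : ℝ => t - t * Real.log t)
            (1 - (Real.log t + 1)) t :=
          (hasDerivAt_id t).sub (Real.hasDerivAt_mul_log ht.1.ne')
        convert h1 using 1
        ring)
      (by
        intro t ht
        rw [min_eq_left hc0, max_eq_right hc0] at ht
        have : Real.log t ≤ 0 := Real.log_nonpos ht.1.le (ht.2.le.trans hc1)
        show 0 ≤ -Real.log t
        linarith)
    have h2 := h.neg
    have heq : (-fun t : ℝ => -Real.log t) = Real.log := by
      funext t; simp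
    rwa [heq] at h2
  rcases le_total b 1 with hb1 | hb1
  · exact base b hb hb1
  · refine (base 1 zero_le_one le_rfl).trans ?_
    refine ContinuousOn.intervalIntegrable ?_
    refine Real.continuousOn_log.mono ?_
    intro t ht
    rw [uIcc_of_le hb1] at ht
    simp only [mem_compl_iff, mem_singleton_iff]
    intro h
    rw [h] at ht
    linarith [ht.1]

lemma intervalIntegrable_log_mul (z : ℝ) (hz : 0 < z) {b : ℝ} (hb : 0 ≤ b) :
    IntervalIntegrable (fun t : ℝ => Real.log (t * z)) MeasureTheory.volume 0 b := by
  have h1 : IntervalIntegrable (fun t : ℝ => Real.log t + Real.log z)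
      MeasureTheory.volume 0 b :=
    (intervalIntegrable_log_aux hb).add intervalIntegrable_const
  rw [intervalIntegrable_iff_integrableOn_Ioc_of_le hb] at h1 ⊢
  refine h1.congr_fun ?_ measurableSet_Ioc
  intro t ht
  show Real.log t + Real.log z = Real.log (t * z)
  rw [Real.log_mul ht.1.ne' hz.ne']

lemma integral_log_mul (z : ℝ) (hz : 0 < z) (N : ℕ) :
    ∫ t in (0:ℝ)..(N:ℝ), Real.log (t * z)
      = (N:ℝ) * Real.log ((N:ℝ) * z) - N := by
  have hN : (0:ℝ) ≤ (N:ℝ) := Nat.cast_nonneg N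
  have hcont : ContinuousOn (fun t : ℝ => t * Real.log (t * z) - t) (Icc (0:ℝ) (N:ℝ)) := by
    have heq : (fun t : ℝ => t * Real.log (t * z) - t)
        = fun t : ℝ => ((t * z) * Real.log (t * z)) / z - t := by
      funext t
      field_simp
    rw [heq]
    exact (((Real.continuous_mul_log.comp (continuous_mul_right z)).div_const z).sub
      continuous_id).continuousOn
  have hderiv : ∀ t ∈ Ioo (0:ℝ) (N:ℝ),
      HasDerivAt (fun t : ℝ => t * Real.log (t * z) - t) (Real.log (t * z)) t := by
    intro t ht
    have htz : 0 < t * z := mul_pos ht.1 hz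
    have h1 : HasDerivAt (fun t : ℝ => t * z) z t := hasDerivAt_mul_const z
    have h2 : HasDerivAt (fun u : ℝ => u * Real.log u) (Real.log (t * z) + 1) (t * z) :=
      Real.hasDerivAt_mul_log htz.ne'
    have h3 : HasDerivAt (fun t : ℝ => (t * z) * Real.log (t * z))
        ((Real.log (t * z) + 1) * z) t := by have := h2.comp t h1; exact this
    have h4 : HasDerivAt (fun t : ℝ => ((t * z) * Real.log (t * z)) / z - t)
        ((Real.log (t * z) + 1) * z / z - 1) t := (h3.div_const z).sub (hasDerivAt_id t)
    have heq : (fun t : ℝ => ((t * z) * Real.log (t * z)) / z - t)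
        = fun t : ℝ => t * Real.log (t * z) - t := by
      funext t
      field_simp
    rw [heq] at h4
    convert h4 using 1
    field_simp
    ring
  have hint : IntervalIntegrable (fun t : ℝ => Real.log (t * z))
      MeasureTheory.volume 0 (N:ℝ) := intervalIntegrable_log_mul z hz hN
  have key := intervalIntegral.integral_eq_sub_of_hasDerivAt_of_le hN hcont hderiv hint
  rw [key]
  simp

/-- The Stirling remainder. -/
noncomputable def q (x : ℝ) : ℝ :=
  Real.log (Real.Gamma (x + 1)) - ((x + 1/2) * Real.log x - x)

lemma q_nat_tendsto :
    Tendsto (fun n : ℕ => q n) atTop (nhds (Real.log (2 * π) / 2)) := by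
  have hs : Tendsto (fun n : ℕ => Real.log (Stirling.stirlingSeq n) + 1/2 * Real.log 2)
      atTop (nhds (Real.log (2 * π) / 2)) := by
    have h1 : Tendsto (fun n : ℕ => Real.log (Stirling.stirlingSeq n)) atTop
        (nhds (Real.log (Real.sqrt π))) :=
      ((Real.continuousAt_log (Real.sqrt_pos.mpr Real.pi_pos).ne').tendsto).comp
        Stirling.tendsto_stirlingSeq_sqrt_pi
    have h2 := h1.add_const (1/2 * Real.log 2)
    convert h2 using 2
    rw [Real.log_sqrt Real.pi_pos.le, Real.log_mul (by norm_num) Real.pi_pos.ne']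
    ring
  refine hs.congr' ?_
  filter_upwards [eventually_ge_atTop 1] with n hn
  have hn0 : (0:ℝ) < (n:ℝ) := by exact_mod_cast hn
  have hfact : Real.Gamma ((n:ℝ) + 1) = (Nat.factorial n : ℝ) := Real.Gamma_nat_eq_factorial n
  have hform := Stirling.log_stirlingSeq_formula n
  have hlog2n : Real.log (2 * (n:ℝ)) = Real.log 2 + Real.log n :=
    Real.log_mul (by norm_num) hn0.ne'
  have hlogdiv : Real.log ((n:ℝ) / Real.exp 1) = Real.log n - 1 := by
    rw [Real.log_div hn0.ne' (Real.exp_ne_zero 1), Real.log_exp]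
  rw [q, hfact]
  rw [hform, hlog2n, hlogdiv]
  ring

lemma log_Gamma_lower {n : ℕ} (hn : 1 ≤ n) {x : ℝ} (hx1 : (n:ℝ) ≤ x) :
    (x - n) * Real.log n + Real.log (Nat.factorial n) ≤ Real.log (Real.Gamma (x + 1)) := by
  have hn0 : (0:ℝ) < (n:ℝ) := by exact_mod_cast hn
  have hfact : Real.Gamma ((n:ℝ) + 1) = (Nat.factorial n : ℝ) := Real.Gamma_nat_eq_factorial n
  rcases eq_or_lt_of_le hx1 with h | h
  · rw [← h]
    simp [hfact]
  · have hc := Real.convexOn_log_Gamma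
    have hslope := hc.slope_mono_adjacent (x := (n:ℝ)) (y := (n:ℝ) + 1) (z := x + 1)
      (mem_Ioi.mpr hn0) (mem_Ioi.mpr (by linarith)) (by linarith) (by linarith)
    have hrec : Real.Gamma ((n:ℝ) + 1) = (n:ℝ) * Real.Gamma n := Real.Gamma_add_one hn0.ne'
    have hGn : 0 < Real.Gamma (n:ℝ) := Real.Gamma_pos_of_pos hn0
    have hval : (Real.log ∘ Real.Gamma) ((n:ℝ) + 1) - (Real.log ∘ Real.Gamma) (n:ℝ)
        = Real.log n := by
      simp only [Function.comp_apply, hrec, Real.log_mul hn0.ne' hGn.ne']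
      ring
    rw [show (n:ℝ) + 1 - n = 1 by ring] at hslope
    have hxn : 0 < x + 1 - ((n:ℝ) + 1) := by linarith
    have h2 : Real.log n * (x + 1 - ((n:ℝ)+1))
        ≤ (Real.log ∘ Real.Gamma) (x+1) - (Real.log ∘ Real.Gamma) ((n:ℝ)+1) := by
      rw [div_one, hval] at hslope
      calc Real.log n * (x + 1 - ((n:ℝ)+1))
          = ((Real.log ∘ Real.Gamma) (x+1) - (Real.log ∘ Real.Gamma) ((n:ℝ)+1))
              / (x + 1 - ((n:ℝ)+1)) * (x + 1 - ((n:ℝ)+1))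
            - (((Real.log ∘ Real.Gamma) (x+1) - (Real.log ∘ Real.Gamma) ((n:ℝ)+1))
              / (x + 1 - ((n:ℝ)+1)) - Real.log n) * (x + 1 - ((n:ℝ)+1)) := by ring
        _ ≤ (Real.log ∘ Real.Gamma) (x+1) - (Real.log ∘ Real.Gamma) ((n:ℝ)+1) := by
            rw [div_mul_cancel₀ _ hxn.ne']
            nlinarith [mul_nonneg (sub_nonneg.mpr hslope) hxn.le]
    simp only [Function.comp_apply, hfact] at h2
    nlinarith [h2]

lemma log_Gamma_upper {n : ℕ} (hn : 1 ≤ n) {x : ℝ} (hx1 : (n:ℝ) ≤ x) (hx2 : x ≤ (n:ℝ) + 1) :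
    Real.log (Real.Gamma (x + 1)) ≤ Real.log (Nat.factorial n) + (x - n) * Real.log ((n:ℝ)+1) := by
  have hn0 : (0:ℝ) < (n:ℝ) := by exact_mod_cast hn
  have hfact : Real.Gamma ((n:ℝ) + 1) = (Nat.factorial n : ℝ) := Real.Gamma_nat_eq_factorial n
  have hc := Real.convexOn_log_Gamma
  set a : ℝ := (n:ℝ) + 1 - x with ha
  set b : ℝ := x - n with hb
  have hab : a + b = 1 := by ring
  have ha0 : 0 ≤ a := by simp only [ha]; linarith
  have hb0 : 0 ≤ b := by simp only [hb]; linarith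
  have hcomb := hc.2 (mem_Ioi.mpr (show (0:ℝ) < (n:ℝ)+1 by linarith))
    (mem_Ioi.mpr (show (0:ℝ) < (n:ℝ)+2 by linarith)) ha0 hb0 hab
  have hpt : a • ((n:ℝ)+1) + b • ((n:ℝ)+2) = x + 1 := by
    simp only [smul_eq_mul, ha, hb]; ring
  rw [hpt] at hcomb
  have hrec : Real.Gamma ((n:ℝ) + 2) = ((n:ℝ)+1) * Real.Gamma ((n:ℝ)+1) := by
    have := Real.Gamma_add_one (show ((n:ℝ)+1) ≠ 0 by positivity)
    rw [show (n:ℝ) + 2 = (n:ℝ) + 1 + 1 by ring, this]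
  have hG1 : 0 < Real.Gamma ((n:ℝ)+1) := Real.Gamma_pos_of_pos (by linarith)
  have hval2 : (Real.log ∘ Real.Gamma) ((n:ℝ)+2)
      = Real.log ((n:ℝ)+1) + Real.log (Nat.factorial n) := by
    simp only [Function.comp_apply, hrec, hfact]
    rw [Real.log_mul (by positivity) (by exact_mod_cast (Nat.factorial_pos n).ne')]
  have hval1 : (Real.log ∘ Real.Gamma) ((n:ℝ)+1) = Real.log (Nat.factorial n) := by
    simp only [Function.comp_apply, hfact]
  rw [hval1, hval2] at hcomb
  simp only [Function.comp_apply, smul_eq_mul] at hcomb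
  calc Real.log (Real.Gamma (x + 1))
      ≤ a * Real.log (Nat.factorial n)
        + b * (Real.log ((n:ℝ)+1) + Real.log (Nat.factorial n)) := hcomb
    _ = Real.log (Nat.factorial n) + (x - n) * Real.log ((n:ℝ)+1) := by
        have haa : a = 1 - b := by linarith
        rw [haa, hb]
        ring

lemma q_diff_bound {x : ℝ} (hx : 1 ≤ x) :
    |q x - q (⌊x⌋₊ : ℝ)| ≤ 3 / (2 * (⌊x⌋₊ : ℝ)) := by
  obtain ⟨n, hn⟩ : ∃ n : ℕ, n = ⌊x⌋₊ := ⟨_, rfl⟩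
  rw [← hn]
  have hn1 : 1 ≤ n := hn ▸ Nat.le_floor (by exact_mod_cast hx)
  have hn0 : (0:ℝ) < (n:ℝ) := by exact_mod_cast hn1
  have hfl : (n:ℝ) ≤ x := hn ▸ Nat.floor_le (by linarith)
  have hfu : x < (n:ℝ) + 1 := hn ▸ Nat.lt_floor_add_one x
  have hx0 : (0:ℝ) < x := by linarith
  have hθ0 : 0 ≤ x - n := by linarith
  have hθ1 : x - n < 1 := by linarith
  have hfact : Real.Gamma ((n:ℝ) + 1) = (Nat.factorial n : ℝ) := Real.Gamma_nat_eq_factorial n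
  have hdiff : q x - q (n:ℝ)
      = (Real.log (Real.Gamma (x+1)) - Real.log (Nat.factorial n))
        - (x + 1/2) * (Real.log x - Real.log (n:ℝ))
        - (x - n) * Real.log (n:ℝ) + (x - n) := by
    rw [q, q, hfact]; ring
  -- log inequalities
  have hlog_ub : Real.log x - Real.log n ≤ (x - n) / n := by
    have h1 : Real.log (x / n) ≤ x / n - 1 := Real.log_le_sub_one_of_pos (by positivity)
    rw [Real.log_div hx0.ne' hn0.ne'] at h1
    have h2 : x / (n:ℝ) - 1 = (x - n) / n := by field_simp
    linarith
  have hlog_lb : (x - n) / x ≤ Real.log x - Real.log n := by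
    have h1 : Real.log ((n:ℝ) / x) ≤ (n:ℝ) / x - 1 := Real.log_le_sub_one_of_pos (by positivity)
    rw [Real.log_div hn0.ne' hx0.ne'] at h1
    have h2 : (n:ℝ) / x - 1 = -((x - n) / x) := by field_simp; ring
    linarith
  have hlog_n1 : Real.log ((n:ℝ)+1) - Real.log n ≤ 1 / n := by
    have h1 : Real.log (((n:ℝ)+1) / n) ≤ ((n:ℝ)+1) / n - 1 :=
      Real.log_le_sub_one_of_pos (by positivity)
    rw [Real.log_div (by positivity) hn0.ne'] at h1
    have h2 : ((n:ℝ)+1) / n - 1 = 1 / n := by field_simp; ring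
    linarith
  have hlog_n1' : 0 ≤ Real.log ((n:ℝ)+1) - Real.log n :=
    sub_nonneg.mpr (Real.log_le_log hn0 (by linarith))
  -- Gamma bounds
  have hL := log_Gamma_lower hn1 hfl
  have hU := log_Gamma_upper hn1 hfl hfu.le
  -- auxiliary product bounds
  have hP1 : (x + 1/2) * (Real.log x - Real.log n) ≤ (x + 1/2) * ((x - n) / n) :=
    mul_le_mul_of_nonneg_left hlog_ub (by linarith)
  have hP2 : (x + 1/2) * ((x - n) / x) ≤ (x + 1/2) * (Real.log x - Real.log n) :=
    mul_le_mul_of_nonneg_left hlog_lb (by linarith)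
  have hA : (x - n) * (Real.log ((n:ℝ)+1) - Real.log n) ≤ 1 / n := by
    calc (x - n) * (Real.log ((n:ℝ)+1) - Real.log n)
        ≤ 1 * (Real.log ((n:ℝ)+1) - Real.log n) :=
          mul_le_mul_of_nonneg_right (by linarith) hlog_n1'
      _ = Real.log ((n:ℝ)+1) - Real.log n := one_mul _
      _ ≤ 1 / n := hlog_n1
  have hB : x - n ≤ (x + 1/2) * ((x - n) / x) := by
    have e : (x + 1/2) * ((x - n) / x) = (x - n) + (x - n) / (2 * x) := by
      field_simp
    have : 0 ≤ (x - n) / (2 * x) := by positivity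
    linarith
  have hC : (x + 1/2) * ((x - n) / n) ≤ (x - n) + 3 / (2 * n) := by
    have e : (x + 1/2) * ((x - n) / n) = (x - n) + ((x - n) + 1/2) * (x - n) / n := by
      field_simp; ring
    have h1 : ((x - n) + 1/2) * (x - n) ≤ 3/2 := by nlinarith
    have h2 : ((x - n) + 1/2) * (x - n) / n ≤ (3/2) / n := by gcongr
    have h3 : (3:ℝ)/2 / n = 3 / (2 * n) := by ring
    linarith
  have h1n : 1 / (n:ℝ) ≤ 3 / (2 * n) := by
    rw [div_le_div_iff₀ hn0 (by positivity)]
    linarith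
  rw [abs_le]
  constructor
  · -- lower bound
    linarith [hdiff, hL, hP1, hC]
  · -- upper bound
    have hexp : (x - n) * (Real.log ((n:ℝ)+1) - Real.log n)
        = (x - n) * Real.log ((n:ℝ)+1) - (x - n) * Real.log n := by ring
    linarith [hdiff, hU, hA, hP2, hB, h1n, hexp]

lemma q_tendsto : Tendsto q atTop (nhds (Real.log (2 * π) / 2)) := by
  have hfloor : Tendsto (fun x : ℝ => q (⌊x⌋₊ : ℝ)) atTop (nhds (Real.log (2 * π) / 2)) :=
    q_nat_tendsto.comp tendsto_nat_floor_atTop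
  have hbound : Tendsto (fun x : ℝ => 3 / (2 * (⌊x⌋₊ : ℝ))) atTop (nhds 0) := by
    have h1 : Tendsto (fun n : ℕ => 3 / (2 * (n:ℝ))) atTop (nhds 0) := by
      apply Tendsto.div_atTop (tendsto_const_nhds (x := (3:ℝ)))
      exact (tendsto_natCast_atTop_atTop).const_mul_atTop two_pos
    exact h1.comp tendsto_nat_floor_atTop
  have hdiff : Tendsto (fun x : ℝ => q x - q (⌊x⌋₊ : ℝ)) atTop (nhds 0) := by
    apply squeeze_zero_norm' _ hbound
    filter_upwards [eventually_ge_atTop (1:ℝ)] with x hx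
    simpa using q_diff_bound hx
  have := hdiff.add hfloor
  rw [zero_add] at this
  refine this.congr ?_
  intro x
  ring

lemma harmonic_eq_sum (N : ℕ) :
    (harmonic N : ℝ) = ∑ n ∈ Finset.Icc 1 N, (1 / (n:ℝ)) := by
  rw [harmonic_eq_sum_Icc]
  push_cast
  simp [one_div]

end LimitSumSubIntegralAux

open LimitSumSubIntegralAux in
theorem limit_sum_sub_integral (z : ℝ) (hz : 0 < z) :
    Tendsto (fun N : ℕ =>
        (∑ n ∈ Finset.Icc 1 N, 1 / (2 * (n : ℝ) * z))
          - ∫ t in (0 : ℝ)..(N : ℝ), (digamma (t * z + 1) - Real.log (t * z)))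
      atTop (nhds ((Real.eulerMascheroniConstant - Real.log (2 * π * z)) / (2 * z))) := by
  set c : ℝ := Real.log (2 * π) / 2 with hc
  -- the model sequence
  have hmodel : Tendsto (fun N : ℕ =>
      ((harmonic N : ℝ) - Real.log N) / (2 * z) - q ((N:ℝ) * z) / z - Real.log z / (2 * z))
      atTop (nhds ((Real.eulerMascheroniConstant - Real.log (2 * π * z)) / (2 * z))) := by
    have h1 : Tendsto (fun N : ℕ => ((harmonic N : ℝ) - Real.log N) / (2 * z))
        atTop (nhds (Real.eulerMascheroniConstant / (2 * z))) :=
      Real.tendsto_harmonic_sub_log.div_const (2 * z)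
    have h2 : Tendsto (fun N : ℕ => q ((N:ℝ) * z) / z) atTop (nhds (c / z)) := by
      have hcomp : Tendsto (fun N : ℕ => (N:ℝ) * z) atTop atTop :=
        Tendsto.atTop_mul_const hz tendsto_natCast_atTop_atTop
      exact (q_tendsto.comp hcomp).div_const z
    have h3 := (h1.sub h2).sub_const (Real.log z / (2 * z))
    convert h3 using 2
    rw [hc, Real.log_mul (by positivity) hz.ne']
    field_simp
    ring
  refine hmodel.congr' ?_
  filter_upwards [eventually_ge_atTop 1] with N hN
  have hN0 : (0:ℝ) < (N:ℝ) := by exact_mod_cast hN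
  have hNz : 0 < (N:ℝ) * z := by positivity
  -- compute the sum
  have hsum : (∑ n ∈ Finset.Icc 1 N, 1 / (2 * (n : ℝ) * z)) = (harmonic N : ℝ) / (2 * z) := by
    rw [harmonic_eq_sum, Finset.sum_div]
    apply Finset.sum_congr rfl
    intro n hn
    have hn0 : (0:ℝ) < (n:ℝ) := by
      exact_mod_cast (Finset.mem_Icc.mp hn).1
    field_simp
  -- compute the integral
  have hint : (∫ t in (0:ℝ)..(N:ℝ), (digamma (t * z + 1) - Real.log (t * z)))
      = Real.log (Real.Gamma ((N:ℝ) * z + 1)) / z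
        - ((N:ℝ) * Real.log ((N:ℝ) * z) - N) := by
    rw [intervalIntegral.integral_sub, integral_digamma z hz, integral_log_mul z hz]
    · have hcont : ContinuousOn (fun t : ℝ => digamma (t * z + 1))
          (Set.uIcc (0:ℝ) (N:ℝ)) := by
        intro t ht
        rw [Set.uIcc_of_le (Nat.cast_nonneg N)] at ht
        refine ContinuousAt.continuousWithinAt ?_
        have ht0 : (0:ℝ) ≤ t := ht.1
        have hpos : 0 < t * z + 1 := by positivity
        have hinner : ContinuousAt (fun u : ℝ => u * z + 1) t :=
          ((continuous_mul_right z).add continuous_const).continuousAt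
        exact ContinuousAt.comp (g := digamma) (f := fun u : ℝ => u * z + 1)
          (continuousAt_digamma hpos) hinner
      exact hcont.intervalIntegrable
    · exact intervalIntegrable_log_mul z hz hN0.le
  rw [hsum, hint]
  have hq : Real.log (Real.Gamma ((N:ℝ) * z + 1))
      = q ((N:ℝ) * z) + (((N:ℝ) * z + 1/2) * Real.log ((N:ℝ) * z) - (N:ℝ) * z) := by
    rw [q]; ring
  have hlogNz : Real.log ((N:ℝ) * z) = Real.log N + Real.log z :=
    Real.log_mul hN0.ne' hz.ne'
  rw [hq, hlogNz]
  field_simp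
  ring
end

section
/- For every real z > 0, the function x ↦ x · d/dx( ψ(xz + 1) - log(xz) ) = xz ψ'(xz+1) - 1 tends to -1 as x → 0+ and is asymptotic to -1/(2xz) as x → ∞; consequently, for every p with 1 < p ≤ 2 it belongs to L^p(0, ∞). -/
open Real MeasureTheory Filter

/-- The trigamma function `ψ'`. -/
noncomputable def trigamma (x : ℝ) : ℝ := deriv digamma x

noncomputable def psiSeries (x : ℝ) : ℝ := ∑' n : ℕ, (1/((n:ℝ)+1) - 1/(x+n))


lemma gamma_diff {x : ℝ} (hx : 0 < x) : DifferentiableAt ℝ Real.Gamma x :=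
  Real.differentiableAt_Gamma (fun m => ne_of_gt (by have := Nat.cast_nonneg (α := ℝ) m; linarith))

lemma hasDerivAt_logGamma {x : ℝ} (hx : 0 < x) :
    HasDerivAt (Real.log ∘ Real.Gamma) (digamma x) x := by
  have h := ((gamma_diff hx).hasDerivAt).log (Real.Gamma_pos_of_pos hx).ne'
  exact h

lemma digamma_mono : MonotoneOn digamma (Set.Ioi (0:ℝ)) := by
  have h := Real.convexOn_log_Gamma.monotoneOn_deriv
    (fun x hx => (hasDerivAt_logGamma hx).differentiableAt)
  intro a ha b hb hab
  have ea : deriv (Real.log ∘ Real.Gamma) a = digamma a := (hasDerivAt_logGamma ha).deriv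
  have eb : deriv (Real.log ∘ Real.Gamma) b = digamma b := (hasDerivAt_logGamma hb).deriv
  rw [← ea, ← eb]; exact h ha hb hab

lemma digamma_one : digamma 1 = -Real.eulerMascheroniConstant := by
  rw [digamma, Real.hasDerivAt_Gamma_one.deriv, Real.Gamma_one, div_one]

lemma digamma_rec {x : ℝ} (hx : 0 < x) : digamma (x + 1) = digamma x + 1/x := by
  have hG := (gamma_diff hx).hasDerivAt
  have h1 : HasDerivAt (fun y : ℝ => Real.Gamma (y + 1))
      (deriv Real.Gamma (x+1) * 1) x :=
    (gamma_diff (by linarith)).hasDerivAt.comp x ((hasDerivAt_id x).add_const 1)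
  have h2 : HasDerivAt (fun y : ℝ => y * Real.Gamma y)
      (1 * Real.Gamma x + x * deriv Real.Gamma x) x := (hasDerivAt_id x).mul hG
  have heq : (fun y : ℝ => Real.Gamma (y + 1)) =ᶠ[nhds x] fun y => y * Real.Gamma y := by
    filter_upwards [eventually_gt_nhds hx] with y hy
    exact Real.Gamma_add_one hy.ne'
  have h3 := h2.congr_of_eventuallyEq heq
  have key : deriv Real.Gamma (x+1) = Real.Gamma x + x * deriv Real.Gamma x := by
    have := h1.unique h3; linarith [this]
  have hGx := (Real.Gamma_pos_of_pos hx).ne'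
  rw [digamma, digamma, key, Real.Gamma_add_one hx.ne']
  field_simp
  ring

lemma telescope_hasSum (g : ℕ → ℝ) (hg : ∀ n, g (n+1) ≤ g n)
    (h0 : Tendsto g atTop (nhds 0)) :
    HasSum (fun n => g n - g (n+1)) (g 0) := by
  rw [hasSum_iff_tendsto_nat_of_nonneg (fun n => sub_nonneg.2 (hg n))]
  have : ∀ n : ℕ, ∑ i ∈ Finset.range n, (g i - g (i+1)) = g 0 - g n := by
    intro n; exact Finset.sum_range_sub' g n
  simp_rw [this]
  simpa using tendsto_const_nhds.sub h0

lemma tele_inv {c : ℝ} (hc : 0 < c) :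
    HasSum (fun n : ℕ => 1/(c+n) - 1/(c+n+1)) (1/c) := by
  have h0 : Tendsto (fun n : ℕ => 1/(c+(n:ℝ))) atTop (nhds 0) := by
    have h1 : Tendsto (fun n : ℕ => c + (n:ℝ)) atTop atTop :=
      tendsto_atTop_add_const_left atTop c tendsto_natCast_atTop_atTop
    simpa [one_div, Function.comp_def] using tendsto_inv_atTop_zero.comp h1
  have hg : ∀ n : ℕ, 1/(c+((n+1:ℕ):ℝ)) ≤ 1/(c+(n:ℝ)) := by
    intro n
    apply one_div_le_one_div_of_le (by positivity)
    push_cast; linarith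
  have := telescope_hasSum (fun n : ℕ => 1/(c+(n:ℝ))) hg h0
  simp only [Nat.cast_zero, add_zero] at this
  convert this using 2 with n
  push_cast; ring

lemma summable_sq {x : ℝ} (hx : 0 < x) : Summable (fun n : ℕ => 1/(x+(n:ℝ))^2) := by
  set c := min x (1/2) with hc
  have hc0 : 0 < c := lt_min hx (by norm_num)
  have hsum : Summable (fun n : ℕ => (1/c^2) * (1/((n:ℝ)+1)^2)) := by
    apply Summable.mul_left
    have h2 : Summable (fun n : ℕ => 1/((n:ℝ))^2) := by
      simpa using Real.summable_one_div_nat_pow.mpr (le_refl 2)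
    have := (summable_nat_add_iff 1).mpr h2
    simpa [Nat.cast_add] using this
  apply Summable.of_nonneg_of_le (fun n => by positivity) _ hsum
  intro n
  have hb : c * ((n:ℝ)+1) ≤ x + n := by
    rcases Nat.eq_zero_or_pos n with h | h
    · subst h
      simp only [Nat.cast_zero, zero_add, mul_one, add_zero]
      exact min_le_left x (1/2)
    · have h1 : (1:ℝ) ≤ (n:ℝ) := by exact_mod_cast h
      have h2 : c ≤ 1/2 := min_le_right _ _
      have h3 : c ≤ x := min_le_left _ _
      nlinarith
  have heq : (1/c^2) * (1/((n:ℝ)+1)^2) = 1/(c*((n:ℝ)+1))^2 := by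
    rw [div_mul_div_comm, one_mul, mul_pow]
  rw [heq]
  apply one_div_le_one_div_of_le (by positivity)
  exact pow_le_pow_left₀ (by positivity) hb 2

lemma sum_sq_upper {x : ℝ} (hx : 1/2 < x) :
    ∑' n : ℕ, 1/(x+(n:ℝ))^2 ≤ 1/(x-1/2) := by
  have hx0 : 0 < x := by linarith
  have hc : 0 < x - 1/2 := by linarith
  refine hasSum_le (fun n => ?_) (summable_sq hx0).hasSum (tele_inv hc)
  have h1 : (0:ℝ) < x - 1/2 + n := by positivity
  have h2 : (0:ℝ) < x - 1/2 + n + 1 := by positivity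
  have h3 : (0:ℝ) < x + n := by positivity
  have key : 1/(x-1/2+n) - 1/(x-1/2+n+1) = 1/((x-1/2+n)*(x-1/2+n+1)) := by
    rw [div_sub_div _ _ h1.ne' h2.ne']
    congr 1 <;> ring
  rw [key]
  apply one_div_le_one_div_of_le (by positivity)
  nlinarith

lemma sum_sq_lower {x : ℝ} (hx : 0 < x) :
    1/x + 1/(2*x^2) ≤ ∑' n : ℕ, 1/(x+(n:ℝ))^2 := by
  set T := ∑' n : ℕ, 1/(x+(n:ℝ))^2 with hT
  have hf : HasSum (fun n : ℕ => 1/(x+(n:ℝ))^2) T := (summable_sq hx).hasSum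
  have hf1 : HasSum (fun n : ℕ => 1/(x+(n:ℝ)+1)^2) (T - 1/x^2) := by
    have h := (hasSum_nat_add_iff' (f := fun n : ℕ => 1/(x+(n:ℝ))^2) 1).mpr hf
    simp only [Finset.range_one, Finset.sum_singleton, Nat.cast_zero, add_zero,
      Nat.cast_add, Nat.cast_one, ← add_assoc] at h
    exact h
  have havg : HasSum (fun n : ℕ => (1/(x+(n:ℝ))^2 + 1/(x+(n:ℝ)+1)^2)/2)
      ((T + (T - 1/x^2))/2) := (hf.add hf1).div_const 2
  have hle : 1/x ≤ (T + (T - 1/x^2))/2 := by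
    refine hasSum_le (fun n => ?_) (tele_inv hx) havg
    have ha : (0:ℝ) < x + n := by positivity
    have hb : (0:ℝ) < x + n + 1 := by linarith
    show 1/(x+(n:ℝ)) - 1/(x+(n:ℝ)+1) ≤ (1/(x+(n:ℝ))^2 + 1/(x+(n:ℝ)+1)^2)/2
    have key : 1/(x+(n:ℝ)) - 1/(x+(n:ℝ)+1) = 1/((x+(n:ℝ))*(x+(n:ℝ)+1)) := by
      rw [div_sub_div _ _ ha.ne' hb.ne']
      congr 1 <;> ring
    rw [key, div_add_div _ _ (by positivity) (by positivity), div_div,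
      div_le_div_iff₀ (by positivity) (by positivity)]
    nlinarith [sq_nonneg ((x+(n:ℝ)) - (x+(n:ℝ)+1)), sq_nonneg (x+(n:ℝ)), sq_nonneg (x+(n:ℝ)+1)]
  have e : (T + (T - 1/x^2))/2 = T - 1/(2*x^2) := by ring
  rw [e] at hle; linarith

lemma summable_term {x : ℝ} (hx : 0 < x) :
    Summable (fun n : ℕ => 1/((n:ℝ)+1) - 1/(x+n)) := by
  set c := min x (1/2) with hc
  have hc0 : 0 < c := lt_min hx (by norm_num)
  have hsum : Summable (fun n : ℕ => (|x-1|/c) * (1/((n:ℝ)+1)^2)) := by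
    apply Summable.mul_left
    have h2 : Summable (fun n : ℕ => 1/((n:ℝ))^2) := by
      simpa using Real.summable_one_div_nat_pow.mpr (le_refl 2)
    have := (summable_nat_add_iff 1).mpr h2
    simpa [Nat.cast_add] using this
  apply Summable.of_norm_bounded hsum
  intro n
  show ‖1/((n:ℝ)+1) - 1/(x+(n:ℝ))‖ ≤ (|x-1|/c) * (1/((n:ℝ)+1)^2)
  have hn1 : (0:ℝ) < (n:ℝ)+1 := by positivity
  have hxn : (0:ℝ) < x + n := by positivity
  have hcn : c * ((n:ℝ)+1) ≤ x + n := by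
    rcases Nat.eq_zero_or_pos n with h | h
    · subst h
      simp only [Nat.cast_zero, zero_add, mul_one, add_zero]
      exact min_le_left x (1/2)
    · have h1 : (1:ℝ) ≤ (n:ℝ) := by exact_mod_cast h
      have h2 : c ≤ 1/2 := min_le_right _ _
      have h3 : c ≤ x := min_le_left _ _
      nlinarith
  have key : 1/((n:ℝ)+1) - 1/(x+n) = (x-1)/(((n:ℝ)+1)*(x+n)) := by
    rw [div_sub_div _ _ hn1.ne' hxn.ne']
    congr 1 <;> ring
  rw [Real.norm_eq_abs, key, abs_div, abs_of_pos (show (0:ℝ) < ((n:ℝ)+1)*(x+(n:ℝ)) by nlinarith)]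
  have e2 : (|x-1|/c) * (1/((n:ℝ)+1)^2) = |x-1| / (c*((n:ℝ)+1)^2) := by
    rw [div_mul_div_comm, mul_one]
  rw [e2]
  apply div_le_div_of_nonneg_left (abs_nonneg _) (by positivity)
  nlinarith

lemma psiSeries_mono : MonotoneOn psiSeries (Set.Ioi (0:ℝ)) := by
  intro a ha b hb hab
  apply Summable.tsum_le_tsum _ (summable_term ha) (summable_term hb)
  intro n
  have h1 : (0:ℝ) < a + n := by have := Set.mem_Ioi.mp ha; positivity
  have h2 : 1/(b+(n:ℝ)) ≤ 1/(a+n) := one_div_le_one_div_of_le h1 (by linarith)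
  linarith

lemma psiSeries_one : psiSeries 1 = 0 := by
  have e : (fun n : ℕ => 1/((n:ℝ)+1) - 1/(1+(n:ℝ))) = fun _ => (0:ℝ) := by
    funext n; rw [add_comm (1:ℝ) (n:ℝ)]; ring
  rw [psiSeries, e, tsum_zero]

lemma psiSeries_rec {x : ℝ} (hx : 0 < x) : psiSeries (x+1) = psiSeries x + 1/x := by
  have key := (summable_term hx).hasSum.add (tele_inv hx)
  have e : (fun n : ℕ => (1/((n:ℝ)+1) - 1/(x+n)) + (1/(x+(n:ℝ)) - 1/(x+n+1)))
      = fun n : ℕ => 1/((n:ℝ)+1) - 1/((x+1)+n) := by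
    funext n; ring
  rw [e] at key
  rw [psiSeries, key.tsum_eq, ← psiSeries]

lemma digamma_nat (k : ℕ) : digamma ((k:ℝ)+1) = -Real.eulerMascheroniConstant
    + psiSeries ((k:ℝ)+1) := by
  induction k with
  | zero => simp [digamma_one, psiSeries_one]
  | succ n ih =>
    have hn : (0:ℝ) < (n:ℝ)+1 := by positivity
    have e : ((n+1:ℕ):ℝ) + 1 = ((n:ℝ)+1) + 1 := by push_cast; ring
    rw [e, digamma_rec hn, psiSeries_rec hn, ih]; ring

lemma diff_shift {x : ℝ} (hx : 0 < x) (n : ℕ) :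
    digamma (x+n) - psiSeries (x+n) = digamma x - psiSeries x := by
  induction n with
  | zero => simp
  | succ m ih =>
    have hm : (0:ℝ) < x + m := by positivity
    have e : x + ((m+1:ℕ):ℝ) = (x + m) + 1 := by push_cast; ring
    rw [e, digamma_rec hm, psiSeries_rec hm]
    linarith

lemma digamma_eq_Ioc {x : ℝ} (hx : 0 < x) (hx1 : x ≤ 1) :
    digamma x = -Real.eulerMascheroniConstant + psiSeries x := by
  set d := digamma x - (-Real.eulerMascheroniConstant + psiSeries x) with hd
  have key : ∀ k : ℕ, |d| ≤ 1/((k:ℝ)+1) := by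
    intro k
    have hk1 : (0:ℝ) < (k:ℝ)+1 := by positivity
    have hxk : (0:ℝ) < x + ((k+1:ℕ):ℝ) := by positivity
    -- bracketing at x + (k+1)
    have hcast : x + ((k+1:ℕ):ℝ) = x + ((k:ℝ)+1) := by push_cast; ring
    have hmem1 : ((k:ℝ)+1) ∈ Set.Ioi (0:ℝ) := hk1
    have hmem2 : (x + ((k:ℝ)+1)) ∈ Set.Ioi (0:ℝ) := by simp only [Set.mem_Ioi]; linarith
    have hmem3 : ((k:ℝ)+1+1) ∈ Set.Ioi (0:ℝ) := by simp only [Set.mem_Ioi]; linarith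
    have ha1 : digamma ((k:ℝ)+1) ≤ digamma (x + ((k:ℝ)+1)) :=
      digamma_mono hmem1 hmem2 (by linarith)
    have ha2 : digamma (x + ((k:ℝ)+1)) ≤ digamma ((k:ℝ)+1+1) :=
      digamma_mono hmem2 hmem3 (by linarith)
    have hb1 : psiSeries ((k:ℝ)+1) ≤ psiSeries (x + ((k:ℝ)+1)) :=
      psiSeries_mono hmem1 hmem2 (by linarith)
    have hb2 : psiSeries (x + ((k:ℝ)+1)) ≤ psiSeries ((k:ℝ)+1+1) :=
      psiSeries_mono hmem2 hmem3 (by linarith)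
    have hval1 := digamma_nat k
    have hval2 := digamma_nat (k+1)
    have hcast2 : ((k+1:ℕ):ℝ) + 1 = ((k:ℝ)+1) + 1 := by push_cast; ring
    rw [hcast2] at hval2
    have hrec := psiSeries_rec hk1
    have hshift := diff_shift hx (k+1)
    have hcast3 : x + ((k+1:ℕ):ℝ) = x + ((k:ℝ)+1) := by push_cast; ring
    rw [hcast3] at hshift
    have hdd : d = digamma (x + ((k:ℝ)+1)) - psiSeries (x + ((k:ℝ)+1))
        - (-Real.eulerMascheroniConstant) := by
      rw [hd]; linarith [hshift]
    rw [abs_le]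
    constructor <;> nlinarith [hval1, hval2, hrec, ha1, ha2, hb1, hb2]
  have h0 : Tendsto (fun k : ℕ => 1/((k:ℝ)+1)) atTop (nhds 0) := by
    have h1 : Tendsto (fun k : ℕ => (k:ℝ) + 1) atTop atTop :=
      tendsto_atTop_add_const_right atTop 1 tendsto_natCast_atTop_atTop
    simpa [one_div, Function.comp_def] using tendsto_inv_atTop_zero.comp h1
  have habs : |d| ≤ 0 := ge_of_tendsto h0 (Eventually.of_forall key)
  have : d = 0 := abs_eq_zero.mp (le_antisymm habs (abs_nonneg d))
  rw [hd] at this; linarith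

lemma digamma_eq {x : ℝ} (hx : 0 < x) :
    digamma x = -Real.eulerMascheroniConstant + psiSeries x := by
  set n := ⌈x⌉₊ - 1 with hn
  have hceil : 1 ≤ ⌈x⌉₊ := Nat.one_le_ceil_iff.mpr hx
  have hn1 : (n:ℝ) = (⌈x⌉₊:ℝ) - 1 := by
    rw [hn]; push_cast [Nat.cast_sub hceil]; ring
  set y := x - n with hy
  have hy0 : 0 < y := by
    have := Nat.ceil_lt_add_one hx.le
    rw [hy, hn1]; linarith
  have hy1 : y ≤ 1 := by
    have := Nat.le_ceil x
    rw [hy, hn1]; linarith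
  have hxy : x = y + n := by rw [hy]; ring
  have := diff_shift hy0 n
  have heq := digamma_eq_Ioc hy0 hy1
  rw [hxy]
  linarith

lemma hasDerivAt_digamma {x : ℝ} (hx : 0 < x) :
    HasDerivAt digamma (∑' n : ℕ, 1/(x+(n:ℝ))^2) x := by
  have hx2 : 0 < x/2 := by linarith
  have hg : ∀ (n : ℕ) (y : ℝ), y ∈ Set.Ioi (x/2) →
      HasDerivAt (fun y : ℝ => 1/((n:ℝ)+1) - 1/(y+n)) (1/(y+(n:ℝ))^2) y := by
    intro n y hy
    have hyn : (0:ℝ) < y + n := by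
      have h1 : x/2 < y := hy
      have h2 : (0:ℝ) ≤ (n:ℝ) := Nat.cast_nonneg n
      linarith
    have h1 := ((hasDerivAt_id y).add_const (n:ℝ)).inv hyn.ne'
    have h2 := h1.const_sub (1/((n:ℝ)+1))
    have e1 : (fun y : ℝ => 1/((n:ℝ)+1) - 1/(y+n))
        = fun x => 1/((n:ℝ)+1) - (fun x => id x + (n:ℝ))⁻¹ x := by
      funext u; simp [one_div]
    rw [e1]
    exact h2.congr_deriv (by simp only [id]; ring)
  have hg' : ∀ (n : ℕ) (y : ℝ), y ∈ Set.Ioi (x/2) →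
      ‖1/(y+(n:ℝ))^2‖ ≤ 1/(x/2+(n:ℝ))^2 := by
    intro n y hy
    have h1 : x/2 < y := hy
    have h2 : (0:ℝ) < x/2 + n := by positivity
    have h3 : (0:ℝ) < y + n := by linarith
    rw [Real.norm_eq_abs, abs_of_pos (by positivity)]
    apply one_div_le_one_div_of_le (by positivity)
    nlinarith
  have hsum := hasDerivAt_tsum_of_isPreconnected (summable_sq hx2) isOpen_Ioi
    (convex_Ioi _).isPreconnected hg hg'
    (Set.mem_Ioi.mpr (by linarith : x/2 < x)) (summable_term hx)
    (Set.mem_Ioi.mpr (by linarith : x/2 < x))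
  have hP := hsum.const_add (-Real.eulerMascheroniConstant)
  refine hP.congr_of_eventuallyEq ?_
  filter_upwards [eventually_gt_nhds hx] with y hy
  exact digamma_eq hy

lemma trigamma_eq {x : ℝ} (hx : 0 < x) :
    trigamma x = ∑' n : ℕ, 1/(x+(n:ℝ))^2 := (hasDerivAt_digamma hx).deriv

lemma hasDerivAt_trigamma_comp {z x : ℝ} (hz : 0 < z) (hx : 0 < x) :
    HasDerivAt (fun y : ℝ => digamma (y * z + 1) - Real.log (y * z))
      (z * trigamma (x * z + 1) - 1/x) x := by
  have ht0 : 0 < x * z + 1 := by positivity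
  have h1 : HasDerivAt (fun y : ℝ => y * z + 1) z x := by
    simpa using ((hasDerivAt_id x).mul_const z).add_const 1
  have hdig := (hasDerivAt_digamma ht0).comp x h1
  have hmul : HasDerivAt (fun y : ℝ => y * z) z x := by
    simpa using (hasDerivAt_id x).mul_const z
  have hlog := (Real.hasDerivAt_log (by positivity : x*z ≠ 0)).comp x hmul
  have htotal := hdig.sub hlog
  have e1 : (∑' n : ℕ, 1/((x*z+1)+(n:ℝ))^2) * z = z * trigamma (x*z+1) := by
    rw [trigamma_eq ht0]; ring
  have e2 : (x*z)⁻¹ * z = 1/x := by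
    field_simp
  rw [e1, e2] at htotal
  exact htotal

lemma core_bounds {s T : ℝ} (hs : 0 < s)
    (hlo : 1/(s+1) + 1/(2*(s+1)^2) ≤ T) (hup : T ≤ 1/((s+1)-1/2)) :
    -((s+2)/(2*(s+1)^2)) ≤ s*T - 1 ∧ s*T - 1 ≤ -(1/(2*(s+1)-1)) := by
  constructor
  · have h := mul_le_mul_of_nonneg_left hlo hs.le
    have e : s*(1/(s+1) + 1/(2*(s+1)^2)) - 1 = -((s+2)/(2*(s+1)^2)) := by
      field_simp; ring
    linarith
  · have h := mul_le_mul_of_nonneg_left hup hs.le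
    have e : s*(1/((s+1)-1/2)) - 1 = -(1/(2*(s+1)-1)) := by
      have h1 : (s+1)-1/2 > 0 := by linarith
      have h2 : 2*(s+1)-1 > 0 := by linarith
      rw [mul_one_div, div_sub' h1.ne', neg_div', div_eq_div_iff h1.ne' h2.ne']
      ring
    linarith

lemma F_bounds {z x : ℝ} (hz : 0 < z) (hx : 0 < x) :
    -((x*z+2)/(2*(x*z+1)^2)) ≤ x * z * trigamma (x*z+1) - 1 ∧
      x * z * trigamma (x*z+1) - 1 ≤ -(1/(2*(x*z+1)-1)) := by
  have h0 : (0:ℝ) < x*z := by positivity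
  have ht0 : (0:ℝ) < x*z+1 := by linarith
  have hlo := sum_sq_lower ht0
  have hup := sum_sq_upper (by linarith : 1/2 < x*z+1)
  rw [← trigamma_eq ht0] at hlo hup
  exact core_bounds h0 hlo hup

theorem x_deriv_digamma_Lp (z : ℝ) (hz : 0 < z) :
    (∀ x : ℝ, 0 < x →
      x * deriv (fun y : ℝ => digamma (y * z + 1) - Real.log (y * z)) x
        = x * z * trigamma (x * z + 1) - 1) ∧
    Tendsto (fun x : ℝ =>
        x * deriv (fun y : ℝ => digamma (y * z + 1) - Real.log (y * z)) x)
      (nhdsWithin 0 (Set.Ioi 0)) (nhds (-1)) ∧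
    Tendsto (fun x : ℝ =>
        (x * deriv (fun y : ℝ => digamma (y * z + 1) - Real.log (y * z)) x)
          / (-1 / (2 * x * z)))
      atTop (nhds 1) ∧
    (∀ p : ℝ, 1 < p → p ≤ 2 →
      IntegrableOn
        (fun x : ℝ =>
          |x * deriv (fun y : ℝ => digamma (y * z + 1) - Real.log (y * z)) x| ^ p)
        (Set.Ioi (0 : ℝ))) := by
  have part1 : ∀ x : ℝ, 0 < x →
      x * deriv (fun y : ℝ => digamma (y * z + 1) - Real.log (y * z)) x
        = x * z * trigamma (x * z + 1) - 1 := by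
    intro x hx
    rw [(hasDerivAt_trigamma_comp hz hx).deriv]
    field_simp
  refine ⟨part1, ?_, ?_, ?_⟩
  · -- limit at 0+
    have l0 : Tendsto (fun x : ℝ => x*z) (nhds 0) (nhds 0) := by
      have hc : Continuous fun x : ℝ => x * z := continuous_id.mul (continuous_const : Continuous fun _ : ℝ => z)
      simpa using hc.tendsto 0
    have hlow : Tendsto (fun x : ℝ => -((x*z+2)/(2*(x*z+1)^2))) (nhds 0) (nhds (-1)) := by
      have num : Tendsto (fun x : ℝ => x*z+2) (nhds 0) (nhds 2) := by
        simpa using l0.add tendsto_const_nhds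
      have den : Tendsto (fun x : ℝ => 2*(x*z+1)^2) (nhds 0) (nhds 2) := by
        have h1 : Tendsto (fun x : ℝ => x*z+1) (nhds 0) (nhds 1) := by
          simpa using l0.add tendsto_const_nhds
        have h2 := (h1.pow 2).const_mul 2
        norm_num at h2
        exact h2
      have := (num.div den (by norm_num)).neg
      norm_num at this
      exact this.neg
    have hup : Tendsto (fun x : ℝ => -(1/(2*(x*z+1)-1))) (nhds 0) (nhds (-1)) := by
      have h1 : Tendsto (fun x : ℝ => 2*(x*z+1)-1) (nhds 0) (nhds 1) := by
        have h1 : Tendsto (fun x : ℝ => x*z+1) (nhds 0) (nhds 1) := by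
          simpa using l0.add tendsto_const_nhds
        have := (h1.const_mul 2).sub (tendsto_const_nhds (x := (1:ℝ)))
        norm_num at this
        exact this
      have := ((tendsto_const_nhds (x := (1:ℝ))).div h1 (by norm_num)).neg
      norm_num at this
      simpa [one_div] using this
    refine tendsto_of_tendsto_of_tendsto_of_le_of_le'
      (tendsto_nhdsWithin_of_tendsto_nhds hlow) (tendsto_nhdsWithin_of_tendsto_nhds hup) ?_ ?_
    · filter_upwards [self_mem_nhdsWithin] with x hx
      rw [part1 x hx]
      exact (F_bounds hz hx).1
    · filter_upwards [self_mem_nhdsWithin] with x hx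
      rw [part1 x hx]
      exact (F_bounds hz hx).2
  · -- limit at infinity
    have u : Tendsto (fun x : ℝ => x*z) atTop atTop :=
      Tendsto.atTop_mul_const hz tendsto_id
    have hlowlim : Tendsto (fun x : ℝ => 2*x*z/(2*(x*z+1)-1)) atTop (nhds 1) := by
      have i1 : Tendsto (fun x : ℝ => 1/(2*(x*z+1)-1)) atTop (nhds 0) := by
        have h1 : Tendsto (fun x : ℝ => 2*(x*z+1)-1) atTop atTop := by
          have h2 := tendsto_atTop_add_const_right atTop 1 u
          have h3 := h2.const_mul_atTop (by norm_num : (0:ℝ) < 2)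
          have h4 := tendsto_atTop_add_const_right atTop (-1) h3
          simpa [sub_eq_add_neg] using h4
        simpa [one_div, Function.comp_def] using tendsto_inv_atTop_zero.comp h1
      have heq : ∀ᶠ x : ℝ in atTop, 1 - 1/(2*(x*z+1)-1) = 2*x*z/(2*(x*z+1)-1) := by
        filter_upwards [eventually_gt_atTop 0] with x hx
        have h2 : 2*(x*z+1)-1 > 0 := by nlinarith
        field_simp
        ring
      have h5 := (tendsto_const_nhds (x := (1:ℝ))).sub i1
      rw [sub_zero] at h5
      exact Tendsto.congr' heq h5
    have hB : Tendsto (fun x : ℝ => (x*z+2)/(2*(x*z+1)^2)*(2*x*z)) atTop (nhds 1) := by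
      have h1 : Tendsto (fun x : ℝ => x*z+1) atTop atTop :=
        tendsto_atTop_add_const_right atTop 1 u
      have i2 : Tendsto (fun x : ℝ => 1/((x*z+1)*(x*z+1))) atTop (nhds 0) := by
        have := tendsto_inv_atTop_zero.comp (h1.atTop_mul_atTop₀ h1)
        simpa [one_div, Function.comp_def, mul_inv] using this
      have h6 := (tendsto_const_nhds (x := (1:ℝ))).sub i2
      rw [sub_zero] at h6
      refine Tendsto.congr' ?_ h6
      filter_upwards [eventually_gt_atTop 0] with x hx
      have hs : (0:ℝ) < x*z := mul_pos hx hz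
      have hs1 : (0:ℝ) < x*z+1 := by linarith
      field_simp
      ring
    refine tendsto_of_tendsto_of_tendsto_of_le_of_le' hlowlim hB ?_ ?_
    · filter_upwards [eventually_gt_atTop 0] with x hx
      rw [part1 x hx]
      have hs : (0:ℝ) < x*z := mul_pos hx hz
      have hF := (F_bounds hz hx).2
      have e : (x * z * trigamma (x*z+1) - 1) / (-1/(2*x*z))
          = (2*x*z) * (-(x * z * trigamma (x*z+1) - 1)) := by
        field_simp
      rw [e]
      have hmul := mul_le_mul_of_nonneg_left (neg_le_neg hF) (by linarith : (0:ℝ) ≤ 2*x*z)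
      have e2 : (2*x*z) * (-(-(1/(2*(x*z+1)-1)))) = 2*x*z/(2*(x*z+1)-1) := by
        rw [neg_neg, mul_one_div]
      rw [e2] at hmul
      exact hmul
    · filter_upwards [eventually_gt_atTop 0] with x hx
      rw [part1 x hx]
      have hs : (0:ℝ) < x*z := mul_pos hx hz
      have hF := (F_bounds hz hx).1
      have e : (x * z * trigamma (x*z+1) - 1) / (-1/(2*x*z))
          = (2*x*z) * (-(x * z * trigamma (x*z+1) - 1)) := by
        field_simp
      rw [e]
      have hmul := mul_le_mul_of_nonneg_left (neg_le_neg hF) (by linarith : (0:ℝ) ≤ 2*x*z)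
      rw [neg_neg] at hmul
      have e2 : (2*x*z) * ((x*z+2)/(2*(x*z+1)^2)) = (x*z+2)/(2*(x*z+1)^2)*(2*x*z) := by ring
      rw [e2] at hmul
      exact hmul
  · -- integrability
    intro p hp1 hp2
    have hp0 : (0:ℝ) ≤ p := by linarith
    have meas : Measurable (fun x : ℝ =>
        |x * deriv (fun y : ℝ => digamma (y * z + 1) - Real.log (y * z)) x| ^ p) :=
      (Real.continuous_rpow_const hp0).measurable.comp
        ((measurable_id.mul (measurable_deriv _)).abs)
    have habs : ∀ x : ℝ, 0 < x →
        |x * deriv (fun y : ℝ => digamma (y * z + 1) - Real.log (y * z)) x| ≤ 1/(x*z+1) := by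
      intro x hx
      rw [part1 x hx]
      obtain ⟨h1, h2⟩ := F_bounds hz hx
      have hs : (0:ℝ) < x*z := mul_pos hx hz
      have hs1 : (0:ℝ) < x*z+1 := by linarith
      have hM : (x*z+2)/(2*(x*z+1)^2) ≤ 1/(x*z+1) := by
        rw [div_le_div_iff₀ (by positivity) hs1]
        nlinarith
      have h3 : (0:ℝ) < 1/(2*(x*z+1)-1) := one_div_pos.mpr (by linarith)
      have h4 : (0:ℝ) < 1/(x*z+1) := one_div_pos.mpr hs1
      rw [abs_le]
      exact ⟨by linarith, by linarith⟩
    have hone : ∀ x : ℝ, 0 < x →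
        |x * deriv (fun y : ℝ => digamma (y * z + 1) - Real.log (y * z)) x| ≤ 1 := by
      intro x hx
      have hs : (0:ℝ) < x*z := mul_pos hx hz
      have := habs x hx
      have h2 : 1/(x*z+1) ≤ 1 := by
        rw [div_le_one (by linarith)]; linarith
      linarith
    have int1 : IntegrableOn (fun x : ℝ =>
        |x * deriv (fun y : ℝ => digamma (y * z + 1) - Real.log (y * z)) x| ^ p)
        (Set.Ioc (0:ℝ) 1) := by
      refine Integrable.mono' (g := fun _ => (1:ℝ))
        (integrableOn_const measure_Ioc_lt_top.ne)
        meas.aestronglyMeasurable ?_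
      rw [ae_restrict_iff' measurableSet_Ioc]
      refine Eventually.of_forall fun x hx => ?_
      rw [Real.norm_eq_abs, abs_of_nonneg (Real.rpow_nonneg (abs_nonneg _) p)]
      exact Real.rpow_le_one (abs_nonneg _) (hone x hx.1) hp0
    have int2 : IntegrableOn (fun x : ℝ =>
        |x * deriv (fun y : ℝ => digamma (y * z + 1) - Real.log (y * z)) x| ^ p)
        (Set.Ioi (1:ℝ)) := by
      refine Integrable.mono' (g := fun x : ℝ => z^(-p) * x^(-p))
        (((integrableOn_Ioi_rpow_of_lt (by linarith : -p < -1) one_pos)).const_mul _)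
        meas.aestronglyMeasurable ?_
      rw [ae_restrict_iff' measurableSet_Ioi]
      refine Eventually.of_forall fun x hx => ?_
      have hx1 : (1:ℝ) < x := hx
      have hx0 : (0:ℝ) < x := by linarith
      have hs : (0:ℝ) < x*z := mul_pos hx0 hz
      have hchain : |x * deriv (fun y : ℝ => digamma (y * z + 1) - Real.log (y * z)) x|
          ≤ 1/(x*z) := by
        have h1 := habs x hx0
        have h2 : 1/(x*z+1) ≤ 1/(x*z) := one_div_le_one_div_of_le hs (by linarith)
        linarith
      rw [Real.norm_eq_abs, abs_of_nonneg (Real.rpow_nonneg (abs_nonneg _) p)]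
      calc |x * deriv (fun y : ℝ => digamma (y * z + 1) - Real.log (y * z)) x| ^ p
          ≤ (1/(x*z))^p := Real.rpow_le_rpow (abs_nonneg _) hchain hp0
        _ = z^(-p) * x^(-p) := by
            rw [one_div, Real.inv_rpow hs.le, Real.mul_rpow hx0.le hz.le,
              Real.rpow_neg hz.le, Real.rpow_neg hx0.le, mul_inv, mul_comm]
    have := int1.union int2
    rwa [Set.Ioc_union_Ioi_eq_Ioi zero_le_one] at this
end
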